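/- (Cycle rebalancing for expanding contracted cycles.) Let p ≥ 2 and let W be a directed cycle with nodes v_0, v_1, …, v_{p−1} and arcs (v_i, v_{i+1 mod p}) for i = 0, …, p−1. Let b : {0, …, p−1} → ℝ satisfy Σ_{i} b(i) = 0. Then there exists a nonnegative function y' on the arcs of W such that for every i, y'(v_{i−1 mod p}, v_i) − y'(v_i, v_{i+1 mod p}) = b(i), and such that y'(a) ≤ Σ_{i} |b(i)| for every arc a of W. -/
import Mathlib

/-- Cycle rebalancing: on a directed cycle with `p` nodes (node `i` receives the arc
indexed `(i+p-1) % p` and sends the arc indexed `i`), any balance vector `b` summing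
to zero can be realized by a nonnegative circulation `y'` whose value on every arc is
at most `∑ |b j|`. -/
theorem cycle_rebalancing (p : ℕ) (hp : 2 ≤ p) (b : ℕ → ℝ)
    (hsum : ∑ i ∈ Finset.range p, b i = 0) :
    ∃ y' : ℕ → ℝ,
      (∀ i ∈ Finset.range p, 0 ≤ y' i) ∧
      (∀ i ∈ Finset.range p, y' ((i + p - 1) % p) - y' i = b i) ∧
      (∀ i ∈ Finset.range p, y' i ≤ ∑ j ∈ Finset.range p, |b j|) := by
  set S : ℕ → ℝ := fun i => ∑ j ∈ Finset.range (i + 1), b j with hS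
  have hne : (Finset.range p).Nonempty := ⟨0, Finset.mem_range.mpr (by omega)⟩
  obtain ⟨m, hm, hmax⟩ := Finset.exists_max_image (Finset.range p) S hne
  set C : ℝ := S m with hC
  -- key bound : difference of partial sums bounded by total abs sum
  have key : ∀ a ∈ Finset.range p, ∀ i ∈ Finset.range p,
      S a - S i ≤ ∑ j ∈ Finset.range p, |b j| := by
    intro a ha i hi
    simp only [Finset.mem_range] at ha hi
    rcases le_total a i with h | h
    · have h1 : S a - S i = -(∑ j ∈ Finset.Ico (a+1) (i+1), b j) := by
        rw [Finset.sum_Ico_eq_sub _ (by omega)]; try simp [hS]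
      rw [h1]
      calc -(∑ j ∈ Finset.Ico (a+1) (i+1), b j)
          ≤ ∑ j ∈ Finset.Ico (a+1) (i+1), |b j| := by
            exact (neg_le_abs _).trans (Finset.abs_sum_le_sum_abs _ _)
        _ ≤ ∑ j ∈ Finset.range p, |b j| := by
            apply Finset.sum_le_sum_of_subset_of_nonneg
            · intro x hx
              simp only [Finset.mem_Ico] at hx
              exact Finset.mem_range.mpr (by omega)
            · intros; positivity
    · have h1 : S a - S i = ∑ j ∈ Finset.Ico (i+1) (a+1), b j := by
        rw [Finset.sum_Ico_eq_sub _ (by omega)]; try simp [hS]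
      rw [h1]
      calc ∑ j ∈ Finset.Ico (i+1) (a+1), b j
          ≤ ∑ j ∈ Finset.Ico (i+1) (a+1), |b j| :=
            Finset.sum_le_sum (fun j _ => le_abs_self _)
        _ ≤ ∑ j ∈ Finset.range p, |b j| := by
            apply Finset.sum_le_sum_of_subset_of_nonneg
            · intro x hx
              simp only [Finset.mem_Ico] at hx
              exact Finset.mem_range.mpr (by omega)
            · intros; positivity
  refine ⟨fun i => C - S i, ?_, ?_, ?_⟩
  · intro i hi
    have := hmax i hi
    show 0 ≤ C - S i
    linarith
  · intro i hi
    simp only [Finset.mem_range] at hi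
    rcases Nat.eq_zero_or_pos i with rfl | hpos
    · have h1 : (0 + p - 1) % p = p - 1 := by
        have h0 : 0 + p - 1 = p - 1 := by omega
        rw [h0]; exact Nat.mod_eq_of_lt (by omega)
      have h2 : S (p - 1) = 0 := by
        have : p - 1 + 1 = p := by omega
        simp [hS, this, hsum]
      have h3 : S 0 = b 0 := by simp [hS]
      rw [h1]
      simp only []
      rw [h2, h3]; ring
    · have h1 : (i + p - 1) % p = i - 1 := by
        have : i + p - 1 = (i - 1) + p := by omega
        rw [this, Nat.add_mod_right]
        exact Nat.mod_eq_of_lt (by omega)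
      have h2 : S i = S (i - 1) + b i := by
        simp only [hS]
        rw [Finset.sum_range_succ]
        have hr : Finset.range i = Finset.range (i - 1 + 1) := by congr 1; omega
        rw [hr]
      rw [h1]
      simp only []
      rw [h2]; ring
  · intro i hi
    simpa using key m hm i hi
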